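/- If (x̄, ȳ, ȳ, ū) (with z = y) is a feasible point of the simplified WDP reformulation, then the Mangasarian–Fromovitz constraint qualification fails at this point; specifically, (α, β, η^g, η^u) = (1, 0, ū, −g(x̄,ȳ)) is a nonzero abnormal multiplier for the constraint system of WDP at (x̄, ȳ, ȳ, ū). -/

import Mathlib

open scoped BigOperators

/-- If `(x̄,ȳ,ȳ,ū)` (with `z = y`) is feasible for the simplified WDP
reformulation, then MFCQ fails there: the tuple
`(α,β,η^g,η^u) = (1, 0, ū, −g(x̄,ȳ))` is a nonzero abnormal multiplier for the
constraint system of WDP at `(x̄,ȳ,ȳ,ū)`. -/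
theorem wdp_mfcq_fails_when_z_eq_y
    {n m p : ℕ}
    (f : (Fin n → ℝ) → (Fin m → ℝ) → ℝ)
    (g : (Fin n → ℝ) → (Fin m → ℝ) → Fin p → ℝ)
    (hf : ContDiff ℝ 2 (fun xy : (Fin n → ℝ) × (Fin m → ℝ) => f xy.1 xy.2))
    (hg : ∀ i, ContDiff ℝ 2 (fun xy : (Fin n → ℝ) × (Fin m → ℝ) => g xy.1 xy.2 i))
    (L : (Fin n → ℝ) → (Fin m → ℝ) → (Fin p → ℝ) → ℝ)
    (hL : ∀ x z u, L x z u = f x z + ∑ i, u i * g x z i)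
    (xbar : Fin n → ℝ) (ybar : Fin m → ℝ) (ubar : Fin p → ℝ)
    -- feasibility of (x̄, ȳ, ȳ, ū) for the simplified WDP
    (hgle : ∀ i, g xbar ybar i ≤ 0)
    (hub : ∀ i, 0 ≤ ubar i)
    (hstat : fderiv ℝ (fun z' => L xbar z' ubar) ybar = 0)
    (hineq : f xbar ybar ≤ L xbar ybar ubar) :
    -- the abnormal multiplier (α, β, η^g, η^u) = (1, 0, ū, −g(x̄,ȳ)) belongs
    -- to the set ℳ of abnormal multipliers and is nonzero
    (let α : ℝ := 1
     let β : Fin m → ℝ := 0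
     let ηg : Fin p → ℝ := ubar
     let ηu : Fin p → ℝ := fun i => -(g xbar ybar i)
     -- 0 = α(∇ₓf(x̄,ȳ) − ∇ₓL(x̄,z̄,ū)) + ∇²_{zx}L(x̄,z̄,ū)β + ∇ₓg(x̄,ȳ)η^g
     (α • (fderiv ℝ (fun x' => f x' ybar) xbar -
            fderiv ℝ (fun x' => L x' ybar ubar) xbar) +
        fderiv ℝ (fun x' => fderiv ℝ (fun z' => L x' z' ubar) ybar β) xbar +
        ∑ i, ηg i • fderiv ℝ (fun x' => g x' ybar i) xbar = 0) ∧
     -- 0 = α∇_y f(x̄,ȳ) + ∇_y g(x̄,ȳ)η^g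
     (α • fderiv ℝ (fun y' => f xbar y') ybar +
        ∑ i, ηg i • fderiv ℝ (fun y' => g xbar y' i) ybar = 0) ∧
     -- 0 = −α∇_z L(x̄,z̄,ū) + ∇²_{zz}L(x̄,z̄,ū)β
     (-α • fderiv ℝ (fun z' => L xbar z' ubar) ybar +
        fderiv ℝ (fun z' => fderiv ℝ (fun z'' => L xbar z'' ubar) z' β) ybar = 0) ∧
     -- 0 = −α g(x̄,z̄) + ∇_z g(x̄,z̄)ᵀβ − η^u
     (∀ i, -α * g xbar ybar i + fderiv ℝ (fun z' => g xbar z' i) ybar β - ηu i = 0) ∧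
     -- α ≥ 0, α(f(x̄,ȳ) − L(x̄,z̄,ū)) = 0
     (0 ≤ α) ∧ (α * (f xbar ybar - L xbar ybar ubar) = 0) ∧
     -- η^u ≥ 0, ūᵀη^u = 0, η^g ≥ 0, g(x̄,ȳ)ᵀη^g = 0
     (∀ i, 0 ≤ ηu i) ∧ (∑ i, ubar i * ηu i = 0) ∧
     (∀ i, 0 ≤ ηg i) ∧ (∑ i, g xbar ybar i * ηg i = 0) ∧
     -- the abnormal multiplier is nonzero
     ¬(α = 0 ∧ β = 0 ∧ ηg = 0 ∧ ηu = 0)) := by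

  -- differentiability of the slices
  have hf1 : Differentiable ℝ (fun xy : (Fin n → ℝ) × (Fin m → ℝ) => f xy.1 xy.2) :=
    hf.differentiable (by norm_num)
  have hg1 : ∀ i, Differentiable ℝ (fun xy : (Fin n → ℝ) × (Fin m → ℝ) => g xy.1 xy.2 i) :=
    fun i => (hg i).differentiable (by norm_num)
  have hfx : DifferentiableAt ℝ (fun x' => f x' ybar) xbar :=
    (hf1 (xbar, ybar)).comp (f := fun x' => (x', ybar)) xbar (differentiableAt_id.prodMk (differentiableAt_const _))
  have hfy : DifferentiableAt ℝ (fun y' => f xbar y') ybar :=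
    (hf1 (xbar, ybar)).comp (f := fun y' => (xbar, y')) ybar ((differentiableAt_const _).prodMk differentiableAt_id)
  have hgx : ∀ i, DifferentiableAt ℝ (fun x' => g x' ybar i) xbar := fun i =>
    ((hg1 i) (xbar, ybar)).comp (f := fun x' => (x', ybar)) xbar (differentiableAt_id.prodMk (differentiableAt_const _))
  have hgy : ∀ i, DifferentiableAt ℝ (fun y' => g xbar y' i) ybar := fun i =>
    ((hg1 i) (xbar, ybar)).comp (f := fun y' => (xbar, y')) ybar ((differentiableAt_const _).prodMk differentiableAt_id)
  -- fderiv of L slices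
  have hLx : fderiv ℝ (fun x' => L x' ybar ubar) xbar
      = fderiv ℝ (fun x' => f x' ybar) xbar
        + ∑ i, ubar i • fderiv ℝ (fun x' => g x' ybar i) xbar := by
    have hrw : (fun x' => L x' ybar ubar)
        = fun x' => f x' ybar + ∑ i, ubar i * g x' ybar i := funext fun x' => hL x' ybar ubar
    rw [hrw, fderiv_fun_add hfx (DifferentiableAt.fun_sum fun i _ => (hgx i).const_mul _)]
    congr 1
    rw [fderiv_fun_sum (fun i _ => (hgx i).const_mul _)]
    exact Finset.sum_congr rfl fun i _ => fderiv_const_mul (hgx i) _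
  have hLy : fderiv ℝ (fun y' => L xbar y' ubar) ybar
      = fderiv ℝ (fun y' => f xbar y') ybar
        + ∑ i, ubar i • fderiv ℝ (fun y' => g xbar y' i) ybar := by
    have hrw : (fun y' => L xbar y' ubar)
        = fun y' => f xbar y' + ∑ i, ubar i * g xbar y' i := funext fun y' => hL xbar y' ubar
    rw [hrw, fderiv_fun_add hfy (DifferentiableAt.fun_sum fun i _ => (hgy i).const_mul _)]
    congr 1
    rw [fderiv_fun_sum (fun i _ => (hgy i).const_mul _)]
    exact Finset.sum_congr rfl fun i _ => fderiv_const_mul (hgy i) _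
  have hstat' : fderiv ℝ (fun y' => f xbar y') ybar
      + ∑ i, ubar i • fderiv ℝ (fun y' => g xbar y' i) ybar = 0 := by
    rw [← hLy]; exact hstat
  -- complementarity
  have hsum0 : ∑ i, ubar i * g xbar ybar i = 0 := by
    have h1 : 0 ≤ ∑ i, ubar i * g xbar ybar i := by
      have := hineq; rw [hL] at this; linarith
    have h2 : ∑ i, ubar i * g xbar ybar i ≤ 0 :=
      Finset.sum_nonpos fun i _ => by nlinarith [hub i, hgle i]
    linarith
  refine ⟨?_, ?_, ?_, ?_, zero_le_one, ?_, ?_, ?_, hub, ?_, ?_⟩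
  · rw [hLx]
    simp only [map_zero, fderiv_const_apply, Pi.zero_apply, one_smul]
    abel
  · simpa using hstat'
  · rw [hstat]
    simp only [map_zero, fderiv_const_apply, Pi.zero_apply, smul_zero, add_zero]
  · intro i
    simp only [map_zero]
    ring
  · rw [hL]
    linarith [hsum0]
  · intro i
    simpa using hgle i
  · simp only [mul_neg, Finset.sum_neg_distrib, neg_eq_zero]
    exact hsum0
  · have hc : ∑ i, g xbar ybar i * ubar i = ∑ i, ubar i * g xbar ybar i :=
      Finset.sum_congr rfl fun i _ => mul_comm _ _
    rw [hc]; exact hsum0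
  · rintro ⟨h, -, -, -⟩
    exact one_ne_zero h
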